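/- Let m ≥ 2 be an even integer and let a be a positive integer with gcd(a,m) = 1 (so a is odd). Then (−1)^{(a−1)(m−2)/4 + N} equals the Jacobi symbol (2m/a), where N = #{x : 1 ≤ x ≤ (m−2)/2 and {ax}_{2m} > m}. -/
import Mathlib

open Finset

private lemma negpow_congr {p q : ℕ} (h : p % 2 = q % 2) : (-1 : ℤ) ^ p = (-1) ^ q := by
  rw [← Nat.div_add_mod p 2, ← Nat.div_add_mod q 2, h, pow_add, pow_add, pow_mul, pow_mul]
  norm_num

private lemma rect (p q X Y : ℕ) (hp : 0 < p) (hq : 0 < q)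
    (h1 : ∀ x ∈ Icc 1 X, q * x / p ≤ Y ∧ ¬ p ∣ q * x)
    (h2 : ∀ y ∈ Icc 1 Y, p * y / q ≤ X ∧ ¬ q ∣ p * y) :
    (∑ x ∈ Icc 1 X, q * x / p) + (∑ y ∈ Icc 1 Y, p * y / q) = X * Y := by
  have e1 : ∀ x ∈ Icc 1 X, q * x / p = ((Icc 1 Y).filter (fun y => p * y ≤ q * x)).card := by
    intro x hx
    obtain ⟨hle, hnd⟩ := h1 x hx
    have hset : (Icc 1 Y).filter (fun y => p * y ≤ q * x) = Icc 1 (q * x / p) := by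
      ext y
      simp only [mem_filter, mem_Icc]
      constructor
      · rintro ⟨⟨h1y, _⟩, h3y⟩
        exact ⟨h1y, (Nat.le_div_iff_mul_le hp).mpr (by rw [Nat.mul_comm]; exact h3y)⟩
      · rintro ⟨h1y, h2y⟩
        have h3 := (Nat.le_div_iff_mul_le hp).mp h2y
        exact ⟨⟨h1y, le_trans h2y hle⟩, by rw [Nat.mul_comm p y]; exact h3⟩
    rw [hset, Nat.card_Icc, Nat.add_sub_cancel]
  have e2 : ∀ y ∈ Icc 1 Y, p * y / q = ((Icc 1 X).filter (fun x => ¬ p * y ≤ q * x)).card := by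
    intro y hy
    obtain ⟨hle, hnd⟩ := h2 y hy
    have hset : (Icc 1 X).filter (fun x => ¬ p * y ≤ q * x) = Icc 1 (p * y / q) := by
      ext x
      simp only [mem_filter, mem_Icc, not_le]
      constructor
      · rintro ⟨⟨h1x, _⟩, h3x⟩
        refine ⟨h1x, (Nat.le_div_iff_mul_le hq).mpr ?_⟩
        rw [mul_comm]
        exact le_of_lt h3x
      · rintro ⟨h1x, h2x⟩
        have hxq := (Nat.le_div_iff_mul_le hq).mp h2x
        have hne : q * x ≠ p * y := fun h => hnd ⟨x, h.symm⟩
        refine ⟨⟨h1x, le_trans h2x hle⟩, lt_of_le_of_ne ?_ hne⟩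
        rw [Nat.mul_comm q x]
        exact hxq
    rw [hset, Nat.card_Icc, Nat.add_sub_cancel]
  rw [Finset.sum_congr rfl e1, Finset.sum_congr rfl e2]
  simp_rw [Finset.card_filter]
  rw [Finset.sum_comm (s := Icc 1 Y) (t := Icc 1 X), ← Finset.sum_add_distrib]
  have hrow : ∀ x ∈ Icc 1 X,
      ((∑ y ∈ Icc 1 Y, if p * y ≤ q * x then 1 else 0) +
        ∑ y ∈ Icc 1 Y, if ¬ p * y ≤ q * x then 1 else 0) = Y := by
    intro x _
    rw [← Finset.sum_add_distrib]
    have hone : ∀ y ∈ Icc 1 Y,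
        ((if p * y ≤ q * x then 1 else 0) + if ¬ p * y ≤ q * x then 1 else 0) = 1 := by
      intro y _
      by_cases h : p * y ≤ q * x <;> simp [h]
    rw [Finset.sum_congr rfl hone, Finset.sum_const, Nat.card_Icc, smul_eq_mul,
      Nat.add_sub_cancel, mul_one]
  rw [Finset.sum_congr rfl hrow, Finset.sum_const, Nat.card_Icc, smul_eq_mul,
    Nat.add_sub_cancel]

private lemma rect_cond {a b : ℕ} (ha2 : a % 2 = 1) (hb2 : b % 2 = 1)
    (hab : Nat.Coprime a b) : ∀ x ∈ Icc 1 (a / 2), b * x / a ≤ b / 2 ∧ ¬ a ∣ b * x := by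
  intro x hx
  rw [mem_Icc] at hx
  have ha0 : 0 < a := by omega
  constructor
  · have hbx : b * x ≤ b * (a / 2) := Nat.mul_le_mul_left b hx.2
    have h1 : b * x < (b / 2 + 1) * a := by
      have haa : a = 2 * (a / 2) + 1 := by omega
      have hbb : b = 2 * (b / 2) + 1 := by omega
      nlinarith [hbx]
    exact Nat.lt_succ_iff.mp ((Nat.div_lt_iff_lt_mul ha0).mpr h1)
  · intro hdvd
    have hax : a ∣ x := hab.dvd_of_dvd_mul_left hdvd
    have := Nat.le_of_dvd (by omega) hax
    omega

private lemma eisen : ∀ a b : ℕ, a % 2 = 1 → b % 2 = 1 → Nat.Coprime a b →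
    jacobiSym (b : ℤ) a = (-1) ^ (∑ y ∈ Icc 1 (a / 2), b * y / a) := by
  intro a
  induction a using Nat.strong_induction_on with
  | _ a IH =>
  intro b
  induction b using Nat.strong_induction_on with
  | _ b IHb =>
  intro ha2 hb2 hab
  have ha0 : 0 < a := by omega
  have hb0 : 0 < b := by omega
  rcases eq_or_ne a 1 with rfl | ha1
  · norm_num [jacobiSym.one_right]
  rcases lt_trichotomy b a with hba | rfl | hab'
  · -- swap via reciprocity
    have hrec := jacobiSym.quadratic_reciprocity (Nat.odd_iff.mpr hb2) (Nat.odd_iff.mpr ha2)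
    have hswap := IH b hba a hb2 ha2 hab.symm
    have hrect := rect a b (a / 2) (b / 2) ha0 hb0 (rect_cond ha2 hb2 hab)
      (rect_cond hb2 ha2 hab.symm)
    rw [hrec, hswap, ← pow_add, mul_comm (b / 2) (a / 2)]
    apply negpow_congr
    revert hrect
    generalize (∑ y ∈ Icc 1 (a / 2), b * y / a) = s1
    generalize (∑ y ∈ Icc 1 (b / 2), a * y / b) = s2
    generalize (a / 2 * (b / 2)) = P
    omega
  · exact absurd (((Nat.coprime_self _).mp hab)) ha1
  · rcases lt_or_ge b (2 * a) with h2a | h2a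
    · -- reflect b ↦ 2a - b
      have hb'2 : (2 * a - b) % 2 = 1 := by omega
      have hb'lt : 2 * a - b < b := by omega
      have hb'0 : 0 < 2 * a - b := by omega
      have hcop' : Nat.Coprime a (2 * a - b) := by
        rw [Nat.coprime_iff_gcd_eq_one]
        have hd : Nat.gcd a (2 * a - b) ∣ b := by
          have hg1 : Nat.gcd a (2 * a - b) ∣ 2 * a :=
            Dvd.dvd.mul_left (Nat.gcd_dvd_left _ _) 2
          have hg2 := Nat.gcd_dvd_right a (2 * a - b)
          have := Nat.dvd_sub hg1 hg2
          rwa [show 2 * a - (2 * a - b) = b by omega] at this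
        have hdd := Nat.dvd_gcd (Nat.gcd_dvd_left a (2 * a - b)) hd
        rw [Nat.coprime_iff_gcd_eq_one] at hab
        rw [hab] at hdd
        exact Nat.dvd_one.mp hdd
      have hIH := IHb (2 * a - b) hb'lt ha2 hb'2 hcop'
      have hterm : ∀ y ∈ Icc 1 (a / 2), b * y / a + (2 * a - b) * y / a + 1 = 2 * y := by
        intro y hy
        rw [mem_Icc] at hy
        have hnd1 : ¬ a ∣ b * y := by
          intro h
          have := Nat.le_of_dvd (by omega) (hab.dvd_of_dvd_mul_left h)
          omega
        have hadd : (2 * a - b) * y + b * y = 2 * a * y := by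
          rw [← add_mul, show 2 * a - b + b = 2 * a from by omega]
        have hnd2 : ¬ a ∣ (2 * a - b) * y := by
          intro h
          have h2' : a ∣ 2 * a * y - (2 * a - b) * y :=
            Nat.dvd_sub ⟨2 * y, by ring⟩ h
          rw [show 2 * a * y - (2 * a - b) * y = b * y from by omega] at h2'
          exact hnd1 h2'
        have e1 := Nat.div_add_mod (b * y) a
        have e2 := Nat.div_add_mod ((2 * a - b) * y) a
        have r1pos : 0 < b * y % a :=
          Nat.pos_of_ne_zero fun h => hnd1 (Nat.dvd_of_mod_eq_zero h)
        have r2pos : 0 < (2 * a - b) * y % a :=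
          Nat.pos_of_ne_zero fun h => hnd2 (Nat.dvd_of_mod_eq_zero h)
        have r1lt : b * y % a < a := Nat.mod_lt _ ha0
        have r2lt : (2 * a - b) * y % a < a := Nat.mod_lt _ ha0
        have hnat : a * (b * y / a) + b * y % a +
            (a * ((2 * a - b) * y / a) + (2 * a - b) * y % a) = 2 * a * y := by
          rw [e1, e2]
          linarith [hadd]
        have hint : (a : ℤ) * ((b * y / a : ℕ) : ℤ) + ((b * y % a : ℕ) : ℤ) +
            ((a : ℤ) * (((2 * a - b) * y / a : ℕ) : ℤ) + (((2 * a - b) * y % a : ℕ) : ℤ))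
            = 2 * (a : ℤ) * (y : ℤ) := by exact_mod_cast hnat
        have hz : (a : ℤ) * (((b * y / a : ℕ) : ℤ) + (((2 * a - b) * y / a : ℕ) : ℤ) + 1
            - 2 * (y : ℤ)) = (a : ℤ) - ((b * y % a : ℕ) : ℤ) - (((2 * a - b) * y % a : ℕ) : ℤ) := by
          linear_combination hint
        have hr1 : (1 : ℤ) ≤ ((b * y % a : ℕ) : ℤ) := by exact_mod_cast r1pos
        have hr2 : (1 : ℤ) ≤ (((2 * a - b) * y % a : ℕ) : ℤ) := by exact_mod_cast r2pos
        have hr1' : ((b * y % a : ℕ) : ℤ) < (a : ℤ) := by exact_mod_cast r1lt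
        have hr2' : (((2 * a - b) * y % a : ℕ) : ℤ) < (a : ℤ) := by exact_mod_cast r2lt
        have hA : (0 : ℤ) < (a : ℤ) := by exact_mod_cast ha0
        have hd0 : ((b * y / a : ℕ) : ℤ) + (((2 * a - b) * y / a : ℕ) : ℤ) + 1
            - 2 * (y : ℤ) = 0 := by
          set d : ℤ := ((b * y / a : ℕ) : ℤ) + (((2 * a - b) * y / a : ℕ) : ℤ) + 1
            - 2 * (y : ℤ) with hdd
          rcases lt_trichotomy d 0 with hlt | h0 | hgt
          · exfalso
            have hle : d ≤ -1 := by omega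
            have : (a : ℤ) * d ≤ (a : ℤ) * (-1) :=
              mul_le_mul_of_nonneg_left hle (le_of_lt hA)
            rw [hz] at this
            linarith
          · exact h0
          · exfalso
            have hge : (1 : ℤ) ≤ d := by omega
            have : (a : ℤ) * 1 ≤ (a : ℤ) * d :=
              mul_le_mul_of_nonneg_left hge (le_of_lt hA)
            rw [hz] at this
            linarith
        have : ((b * y / a : ℕ) : ℤ) + (((2 * a - b) * y / a : ℕ) : ℤ) + 1 = 2 * (y : ℤ) := by
          linarith
        exact_mod_cast this
      have hsum2 : (∑ y ∈ Icc 1 (a / 2), b * y / a)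
          + ((∑ y ∈ Icc 1 (a / 2), (2 * a - b) * y / a) + a / 2)
          = 2 * ∑ y ∈ Icc 1 (a / 2), y := by
        have h1 : ∑ y ∈ Icc 1 (a / 2), (b * y / a + ((2 * a - b) * y / a + 1))
            = ∑ y ∈ Icc 1 (a / 2), 2 * y :=
          Finset.sum_congr rfl (fun y hy => by rw [← add_assoc]; exact hterm y hy)
        rw [Finset.sum_add_distrib, Finset.sum_add_distrib, Finset.sum_const, Nat.card_Icc,
          Nat.add_sub_cancel, smul_eq_mul, mul_one, ← Finset.mul_sum] at h1
        exact h1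
      have hj : jacobiSym ((2 * a - b : ℕ) : ℤ) a = (-1) ^ (a / 2) * jacobiSym (b : ℤ) a := by
        have hcast : ((2 * a - b : ℕ) : ℤ) = 2 * (a : ℤ) - b := by
          push_cast [Nat.cast_sub (le_of_lt h2a)]
          ring
        have hm : (2 * (a : ℤ) - b) % a = (-1 * b) % a := by
          rw [show 2 * (a : ℤ) - b = -1 * b + (a : ℤ) * 2 from by ring,
            Int.add_mul_emod_self_left]
        rw [hcast, jacobiSym.mod_left' hm, jacobiSym.mul_left,
          jacobiSym.at_neg_one (Nat.odd_iff.mpr ha2), ZMod.χ₄_eq_neg_one_pow ha2]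
      have hsq : (-1 : ℤ) ^ (a / 2) * (-1) ^ (a / 2) = 1 := by
        rw [← pow_add]
        exact Even.neg_one_pow ⟨a / 2, rfl⟩
      have hkey : jacobiSym (b : ℤ) a =
          (-1) ^ (a / 2) * (-1) ^ (∑ y ∈ Icc 1 (a / 2), (2 * a - b) * y / a) := by
        calc jacobiSym (b : ℤ) a
            = ((-1 : ℤ) ^ (a / 2) * (-1) ^ (a / 2)) * jacobiSym (b : ℤ) a := by
              rw [hsq, one_mul]
          _ = (-1) ^ (a / 2) * ((-1) ^ (a / 2) * jacobiSym (b : ℤ) a) := by ring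
          _ = (-1) ^ (a / 2) * ((-1) ^ (∑ y ∈ Icc 1 (a / 2), (2 * a - b) * y / a)) := by
              rw [← hj, hIH]
      rw [hkey, ← pow_add]
      apply negpow_congr
      omega
    · -- reduce b ↦ b - 2a
      have hbne : b ≠ 2 * a := by omega
      have hb'lt : b - 2 * a < b := by omega
      have hb'2 : (b - 2 * a) % 2 = 1 := by omega
      have hcop' : Nat.Coprime a (b - 2 * a) := by
        rw [Nat.coprime_iff_gcd_eq_one]
        have hgcd : Nat.gcd a b = Nat.gcd a (b - 2 * a) := by
          conv_lhs => rw [show b = b - 2 * a + 2 * a from by omega]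
          rw [Nat.gcd_add_mul_right_right]
        rw [← hgcd]
        exact Nat.coprime_iff_gcd_eq_one.mp hab
      have hIH := IHb (b - 2 * a) hb'lt ha2 hb'2 hcop'
      have hj : jacobiSym (b : ℤ) a = jacobiSym ((b - 2 * a : ℕ) : ℤ) a := by
        apply jacobiSym.mod_left'
        have hcast : ((b - 2 * a : ℕ) : ℤ) = (b : ℤ) - 2 * a := by
          push_cast [Nat.cast_sub h2a]
          ring
        rw [hcast, show (b : ℤ) - 2 * a = (b : ℤ) + (a : ℤ) * (-2) from by ring,
          Int.add_mul_emod_self_left]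
      have hterm : ∀ y ∈ Icc 1 (a / 2), b * y / a = (b - 2 * a) * y / a + 2 * y := by
        intro y _
        have hbe : b * y = (b - 2 * a) * y + 2 * y * a := by
          rw [show 2 * y * a = 2 * a * y from by ring, ← add_mul,
            show b - 2 * a + 2 * a = b from by omega]
        rw [hbe, Nat.add_mul_div_right _ _ ha0]
      have hsum2 : ∑ y ∈ Icc 1 (a / 2), b * y / a
          = (∑ y ∈ Icc 1 (a / 2), (b - 2 * a) * y / a) + 2 * ∑ y ∈ Icc 1 (a / 2), y := by
        have h1 : ∑ y ∈ Icc 1 (a / 2), b * y / a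
            = ∑ y ∈ Icc 1 (a / 2), ((b - 2 * a) * y / a + 2 * y) :=
          Finset.sum_congr rfl hterm
        rw [h1, Finset.sum_add_distrib, ← Finset.mul_sum]
      rw [hj, hIH]
      apply negpow_congr
      omega

/-- Let `m ≥ 2` be an even integer and `a` a positive integer with `gcd(a,m) = 1`
(so `a` is odd).  Then `(-1)^{(a-1)(m-2)/4 + N}` equals the Jacobi symbol `(2m/a)`,
where `N = #{x : 1 ≤ x ≤ (m-2)/2 and {ax}_{2m} > m}` and `{y}_{2m}` denotes the residue
of `y` modulo `2m` in `[0, 2m-1]`. -/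
theorem stmt6 (m a : ℕ) (hm : 2 ≤ m) (hmeven : Even m) (ha : 0 < a)
    (hcop : Nat.Coprime a m) :
    (-1 : ℤ) ^ ((a - 1) * (m - 2) / 4 +
        ((Finset.Icc 1 ((m - 2) / 2)).filter fun x => m < (a * x) % (2 * m)).card) =
      jacobiSym (2 * m : ℤ) a := by
  have hm2 : (2 : ℕ) ∣ m := hmeven.two_dvd
  have ha2 : a % 2 = 1 := by
    rcases Nat.even_or_odd a with he | ho
    · exfalso
      have h2 : (2 : ℕ) ∣ Nat.gcd a m := Nat.dvd_gcd he.two_dvd hm2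
      rw [Nat.coprime_iff_gcd_eq_one.mp hcop] at h2
      omega
    · exact Nat.odd_iff.mp ho
  set X := (m - 2) / 2 with hX
  set c := a / 2 with hc
  have hmX : m = 2 * X + 2 := by omega
  have hac : a = 2 * c + 1 := by omega
  have ha0 : 0 < a := ha
  have hm0 : 0 < m := by omega
  -- Step A : the count is congruent mod 2 to a sum of floors
  have hstepA : ((Icc 1 X).filter fun x => m < (a * x) % (2 * m)).card % 2
      = (∑ x ∈ Icc 1 X, a * x / m) % 2 := by
    rw [Finset.card_filter, Finset.sum_nat_mod]
    rw [Finset.sum_congr rfl (g := fun x => (a * x / m) % 2) ?_, ← Finset.sum_nat_mod]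
    intro x hx
    rw [mem_Icc] at hx
    have hndvd : ¬ m ∣ a * x := by
      intro hd
      have := Nat.le_of_dvd (by omega) (hcop.symm.dvd_of_dvd_mul_left hd)
      omega
    have hne : (a * x) % (2 * m) ≠ m := by
      intro h
      apply hndvd
      have hdm := Nat.div_add_mod (a * x) (2 * m)
      exact ⟨2 * (a * x / (2 * m)) + 1, by
        rw [mul_add, mul_one, ← mul_assoc, mul_comm m 2]
        linarith⟩
    have hkey : (a * x) % (2 * m) / m = (a * x / m) % 2 := by
      rw [mul_comm 2 m, Nat.mod_mul_right_div_self]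
    by_cases hgt : m < (a * x) % (2 * m)
    · simp only [hgt, if_true]
      have hlt2 : (a * x) % (2 * m) < 2 * m := Nat.mod_lt _ (by omega)
      have hone : (a * x) % (2 * m) / m = 1 :=
        Nat.div_eq_of_lt_le (by omega) (by omega)
      rw [← hkey, hone]
    · simp only [hgt, if_false]
      have hlt : (a * x) % (2 * m) < m := by omega
      rw [← hkey, Nat.div_eq_of_lt hlt]
  -- Step B : rectangle identity
  have h1 : ∀ x ∈ Icc 1 X, a * x / m ≤ c ∧ ¬ m ∣ a * x := by
    intro x hx
    rw [mem_Icc] at hx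
    constructor
    · have hb : a * x < (c + 1) * m := by
        have hax : a * x ≤ a * X := Nat.mul_le_mul_left a hx.2
        nlinarith [hax]
      exact Nat.lt_succ_iff.mp ((Nat.div_lt_iff_lt_mul hm0).mpr hb)
    · intro hd
      have := Nat.le_of_dvd (by omega) (hcop.symm.dvd_of_dvd_mul_left hd)
      omega
  have h2 : ∀ y ∈ Icc 1 c, m * y / a ≤ X ∧ ¬ a ∣ m * y := by
    intro y hy
    rw [mem_Icc] at hy
    constructor
    · have hb : m * y < (X + 1) * a := by
        have hmy : m * y ≤ m * c := Nat.mul_le_mul_left m hy.2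
        nlinarith [hmy]
      exact Nat.lt_succ_iff.mp ((Nat.div_lt_iff_lt_mul ha0).mpr hb)
    · intro hd
      have := Nat.le_of_dvd (by omega) (hcop.dvd_of_dvd_mul_left hd)
      omega
  have hrect := rect m a X c hm0 ha0 h1 h2
  -- Step C : Eisenstein's lemma applications
  have hodd2 : (a + 2) % 2 = 1 := by omega
  have hoddm : (a + m) % 2 = 1 := by omega
  have hgcd2 : Nat.gcd a 2 = 1 := by
    rcases (Nat.dvd_prime Nat.prime_two).mp (Nat.gcd_dvd_right a 2) with h | h
    · exact h
    · exfalso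
      have := h ▸ Nat.gcd_dvd_left a 2
      omega
  have hcop2 : Nat.Coprime a (a + 2) := by
    rw [Nat.coprime_iff_gcd_eq_one, show a + 2 = 2 + 1 * a from by ring,
      Nat.gcd_add_mul_right_right]
    exact hgcd2
  have hcopm : Nat.Coprime a (a + m) := by
    rw [Nat.coprime_iff_gcd_eq_one, show a + m = m + 1 * a from by ring,
      Nat.gcd_add_mul_right_right]
    exact Nat.coprime_iff_gcd_eq_one.mp hcop
  have hE2 := eisen a (a + 2) ha2 hodd2 hcop2
  have hEm := eisen a (a + m) ha2 hoddm hcopm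
  have hT2 : ∑ y ∈ Icc 1 c, (a + 2) * y / a = ∑ y ∈ Icc 1 c, y := by
    apply Finset.sum_congr rfl
    intro y hy
    rw [mem_Icc] at hy
    rw [add_mul, Nat.mul_add_div ha0, Nat.div_eq_of_lt (show 2 * y < a by omega), add_zero]
  have hTm : ∑ y ∈ Icc 1 c, (a + m) * y / a
      = (∑ y ∈ Icc 1 c, y) + ∑ y ∈ Icc 1 c, m * y / a := by
    rw [← Finset.sum_add_distrib]
    apply Finset.sum_congr rfl
    intro y _
    rw [add_mul, Nat.mul_add_div ha0]
  have hJ2 : jacobiSym (2 : ℤ) a = jacobiSym ((a + 2 : ℕ) : ℤ) a := by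
    apply jacobiSym.mod_left'
    push_cast
    rw [show (a : ℤ) + 2 = 2 + (a : ℤ) * 1 from by ring, Int.add_mul_emod_self_left]
  have hJm : jacobiSym (m : ℤ) a = jacobiSym ((a + m : ℕ) : ℤ) a := by
    apply jacobiSym.mod_left'
    push_cast
    rw [show (a : ℤ) + m = (m : ℤ) + (a : ℤ) * 1 from by ring, Int.add_mul_emod_self_left]
  have hRHS : jacobiSym (2 * (m : ℤ)) a = (-1 : ℤ) ^ (∑ y ∈ Icc 1 c, m * y / a) := by
    rw [jacobiSym.mul_left, hJ2, hJm, hE2, hEm, hT2, hTm, ← pow_add]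
    apply negpow_congr
    omega
  have hdiv4 : (a - 1) * (m - 2) / 4 = c * X := by
    have h4 : (a - 1) * (m - 2) = c * X * 4 := by
      rw [show a - 1 = 2 * c from by omega, show m - 2 = 2 * X from by omega]
      ring
    rw [h4, Nat.mul_div_cancel _ (by norm_num)]
  rw [hdiv4]
  have hgoalR : jacobiSym (2 * (m : ℤ)) a = jacobiSym (2 * m : ℤ) a := by norm_num
  rw [← hgoalR, hRHS]
  apply negpow_congr
  have hcx : c * X = (∑ x ∈ Icc 1 X, a * x / m) + (∑ y ∈ Icc 1 c, m * y / a) := by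
    rw [mul_comm]
    exact hrect.symm
  rw [hcx]
  omega
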